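/- Let 0 < χ ≤ 1 and σ* := 2, let u^{σ*}(z) := ((1−χ) z + 1) e^{−z}/(2−χ) for z > 0 and 1/(2−χ) for z ≤ 0, and define β(z) := σ* − χ·𝟙{z<0} + 2 (u^{σ*})'(z)/u^{σ*}(z) for z ≠ 0; explicitly β(z) = 2 − χ for z < 0 and β(z) = 2(1−χ)/((1−χ) z + 1) for z > 0. Define v_∞(z) := e^{(2−χ) z} for z < 0 and v_∞(z) := ((1−χ) z + 1)² for z ≥ 0. Then v_∞ is a distributional stationary solution of ∂_s v − ∂_z² v + ∂_z(β v) = 0, i.e. for every φ ∈ C_c²(ℝ): ∫_ℝ v_∞(z) φ''(z) dz + ∫_ℝ β(z) v_∞(z) φ'(z) dz = 0; however v_∞ is not integrable: v_∞ ∉ L¹(ℝ). -/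

import Mathlib

open MeasureTheory Set Filter

noncomputable section

/-- The pulled traveling wave profile (`0 < χ ≤ 1`). -/
def uprofPulled (χ : ℝ) (z : ℝ) : ℝ :=
  if 0 < z then ((1 - χ) * z + 1) * Real.exp (-z) / (2 - χ) else 1 / (2 - χ)

/-- The ancestral-lineage drift in the pulled regime `χ ≤ 1`:
`β(z) = 2 − χ` for `z < 0` and `β(z) = 2(1−χ)/((1−χ)z + 1)` for `z > 0`. -/
def betaPulled (χ : ℝ) (z : ℝ) : ℝ :=
  if z < 0 then 2 - χ else 2 * (1 - χ) / ((1 - χ) * z + 1)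

/-- The stationary ancestral-lineage solution in the pulled regime:
`v_∞(z) = e^{(2−χ)z}` for `z < 0` and `((1−χ)z + 1)²` for `z ≥ 0`. -/
def vinfPulled (χ : ℝ) (z : ℝ) : ℝ :=
  if z < 0 then Real.exp ((2 - χ) * z) else ((1 - χ) * z + 1)^2

namespace PulledNoEqAux

/-- `β v`, the flux function. -/
def wfun (χ : ℝ) (z : ℝ) : ℝ := betaPulled χ z * vinfPulled χ z

lemma vinf_eq (χ : ℝ) : vinfPulled χ = fun z =>
    if z ≤ 0 then Real.exp ((2 - χ) * z) else ((1 - χ) * z + 1)^2 := by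
  funext z
  rcases lt_trichotomy z 0 with h | h | h
  · simp [vinfPulled, h, h.le]
  · subst h; simp [vinfPulled]
  · simp [vinfPulled, not_lt.2 h.le, not_le.2 h]

lemma vinf_cont (χ : ℝ) : Continuous (vinfPulled χ) := by
  rw [vinf_eq]
  refine Continuous.if_le (by continuity) (by continuity) continuous_id continuous_const ?_
  intro z hz
  simp [hz]

lemma w_neg {χ z : ℝ} (hz : z < 0) : wfun χ z = (2 - χ) * Real.exp ((2 - χ) * z) := by
  simp [wfun, betaPulled, vinfPulled, hz]

lemma w_nonneg {χ : ℝ} (hχ1 : χ ≤ 1) {z : ℝ} (hz : 0 ≤ z) :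
    wfun χ z = 2 * (1 - χ) * ((1 - χ) * z + 1) := by
  have hp : (0:ℝ) < (1 - χ) * z + 1 := by nlinarith
  simp only [wfun, betaPulled, vinfPulled, not_lt.2 hz, if_false]
  field_simp

lemma vinf_deriv_neg {χ z : ℝ} (hz : z < 0) :
    HasDerivAt (vinfPulled χ) (wfun χ z) z := by
  have h1 : HasDerivAt (fun y : ℝ => Real.exp ((2 - χ) * y))
      ((2 - χ) * Real.exp ((2 - χ) * z)) z := by
    have := ((hasDerivAt_id z).const_mul (2 - χ)).exp
    simpa [mul_comm] using this
  rw [w_neg hz]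
  refine h1.congr_of_eventuallyEq ?_
  filter_upwards [Iio_mem_nhds hz] with y hy
  simp [vinfPulled, show y < 0 from hy]

lemma vinf_deriv_pos {χ : ℝ} (hχ1 : χ ≤ 1) {z : ℝ} (hz : 0 < z) :
    HasDerivAt (vinfPulled χ) (wfun χ z) z := by
  have h1 : HasDerivAt (fun y : ℝ => ((1 - χ) * y + 1)^2)
      (2 * (1 - χ) * ((1 - χ) * z + 1)) z := by
    have := (((hasDerivAt_id z).const_mul (1 - χ)).add_const 1).pow 2
    refine this.congr_deriv ?_
    simp only [id, Nat.cast_ofNat]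
    ring
  rw [w_nonneg hχ1 hz.le]
  refine h1.congr_of_eventuallyEq ?_
  filter_upwards [Ioi_mem_nhds hz] with y hy
  simp [vinfPulled, not_lt.2 (le_of_lt (show 0 < y from hy))]

end PulledNoEqAux

open PulledNoEqAux

/-- In the pulled regime `0 < χ ≤ 1` with `σ* = 2`:
the drift `β` agrees with `σ* − χ𝟙{z<0} + 2(u^{σ*})'/u^{σ*}` away from `0`,
`v_∞` is a distributional stationary solution of the Fokker–Planck equation
`∂_s v − ∂_z² v + ∂_z(β v) = 0`, but `v_∞` is not integrable. -/
theorem pulled_ancestral_no_equilibrium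
    (χ : ℝ) (hχ0 : 0 < χ) (hχ1 : χ ≤ 1) :
    (∀ z : ℝ, z ≠ 0 →
      betaPulled χ z = 2 - χ * (if z < 0 then 1 else 0)
        + 2 * deriv (uprofPulled χ) z / uprofPulled χ z) ∧
    (∀ φ : ℝ → ℝ, ContDiff ℝ 2 φ → HasCompactSupport φ →
      (∫ z : ℝ, vinfPulled χ z * deriv (deriv φ) z)
        + (∫ z : ℝ, betaPulled χ z * vinfPulled χ z * deriv φ z) = 0) ∧
    ¬ Integrable (vinfPulled χ) := by
  have hc : (0:ℝ) < 2 - χ := by linarith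
  refine ⟨?_, ?_, ?_⟩
  · -- Part 1: β = 2 − χ𝟙 + 2u'/u off 0
    intro z hz
    rcases hz.lt_or_gt with hzneg | hzpos
    · have hconst : uprofPulled χ =ᶠ[nhds z] fun _ => 1 / (2 - χ) := by
        filter_upwards [Iio_mem_nhds hzneg] with y hy
        simp [uprofPulled, not_lt.2 (le_of_lt (show y < 0 from hy))]
      rw [hconst.deriv_eq, deriv_const]
      simp [betaPulled, hzneg]
    · have hp : (0:ℝ) < (1 - χ) * z + 1 := by nlinarith
      have hu : HasDerivAt (uprofPulled χ)
          (((1 - χ) - ((1 - χ) * z + 1)) * Real.exp (-z) / (2 - χ)) z := by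
        have h1 : HasDerivAt (fun y : ℝ => ((1 - χ) * y + 1) * Real.exp (-y) / (2 - χ))
            (((1 - χ) - ((1 - χ) * z + 1)) * Real.exp (-z) / (2 - χ)) z := by
          have hf : HasDerivAt (fun y : ℝ => (1 - χ) * y + 1) (1 - χ) z := by
            simpa using ((hasDerivAt_id z).const_mul (1 - χ)).add_const 1
          have hg : HasDerivAt (fun y : ℝ => Real.exp (-y)) (-Real.exp (-z)) z := by
            have := ((hasDerivAt_id z).neg).exp
            simpa using this
          have := (hf.mul hg).div_const (2 - χ)
          refine this.congr_deriv ?_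
          ring
        refine h1.congr_of_eventuallyEq ?_
        filter_upwards [Ioi_mem_nhds hzpos] with y hy
        simp [uprofPulled, show 0 < y from hy]
      rw [hu.deriv]
      have hexp : Real.exp (-z) ≠ 0 := (Real.exp_pos _).ne'
      simp only [betaPulled, uprofPulled, not_lt.2 hzpos.le, if_false, if_pos hzpos]
      rw [mul_zero, sub_zero]
      field_simp
      ring
  · -- Part 2: distributional stationarity
    intro φ hφ hφc
    have hφ2 : ContDiff ℝ ((1:ℕ) + 1) φ := by exact_mod_cast hφ
    have h2 := contDiff_succ_iff_deriv.mp hφ2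
    have hφd : Differentiable ℝ φ := h2.1
    have hφ1 : ContDiff ℝ (1:ℕ) (deriv φ) := by exact_mod_cast h2.2.2
    have hφ1' : ContDiff ℝ ((0:ℕ) + 1) (deriv φ) := by exact_mod_cast hφ1
    have h1' := contDiff_succ_iff_deriv.mp hφ1'
    have hφd2 : Differentiable ℝ (deriv φ) := h1'.1
    have hcφ' : Continuous (deriv φ) := hφ1.continuous
    have hcφ'' : Continuous (deriv (deriv φ)) := h1'.2.2.continuous
    -- support bound
    obtain ⟨M, hM⟩ := hφc.isCompact.isBounded.subset_closedBall 0
    set R : ℝ := |M| + 1 with hRdef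
    have hR0 : (0:ℝ) < R := by positivity
    have htsupp' : tsupport (deriv φ) ⊆ Metric.closedBall 0 |M| := by
      refine subset_trans ?_ (subset_trans hM
        (Metric.closedBall_subset_closedBall (le_abs_self M)))
      exact closure_minimal (support_deriv_subset (f := φ)) isClosed_closure
    have htsupp'' : tsupport (deriv (deriv φ)) ⊆ Metric.closedBall 0 |M| := by
      refine subset_trans ?_ htsupp'
      exact closure_minimal (support_deriv_subset (f := deriv φ)) isClosed_closure
    have hball : ∀ z : ℝ, z ∉ Icc (-R) R → z ∉ Metric.closedBall (0:ℝ) |M| := by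
      intro z hzn hmem
      rw [Metric.mem_closedBall, Real.dist_eq, sub_zero] at hmem
      rw [mem_Icc] at hzn
      rcases abs_le.mp hmem with ⟨ha, hb⟩
      exact hzn ⟨by simp only [hRdef]; linarith, by simp only [hRdef]; linarith⟩
    have hφ'out : ∀ z : ℝ, z ∉ Icc (-R) R → deriv φ z = 0 := fun z hzn =>
      image_eq_zero_of_notMem_tsupport fun hmem => hball z hzn (htsupp' hmem)
    have hφ''out : ∀ z : ℝ, z ∉ Icc (-R) R → deriv (deriv φ) z = 0 := fun z hzn =>
      image_eq_zero_of_notMem_tsupport fun hmem => hball z hzn (htsupp'' hmem)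
    have hφ'R : deriv φ R = 0 := by
      apply image_eq_zero_of_notMem_tsupport
      intro hmem
      have := htsupp' hmem
      rw [Metric.mem_closedBall, Real.dist_eq, sub_zero] at this
      have hRR : |R| = R := abs_of_pos hR0
      rw [hRR] at this
      simp only [hRdef] at this
      linarith
    have hφ'negR : deriv φ (-R) = 0 := by
      apply image_eq_zero_of_notMem_tsupport
      intro hmem
      have := htsupp' hmem
      rw [Metric.mem_closedBall, Real.dist_eq, sub_zero, abs_neg] at this
      have hRR : |R| = R := abs_of_pos hR0
      rw [hRR] at this
      simp only [hRdef] at this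
      linarith
    set v : ℝ → ℝ := vinfPulled χ with hvdef
    set w : ℝ → ℝ := wfun χ with hwdef
    set G : ℝ → ℝ := fun z => w z * deriv φ z + v z * deriv (deriv φ) z with hGdef
    have hvc : Continuous v := vinf_cont χ
    have hzero_ae : ∀ᵐ z : ℝ, z ≠ (0:ℝ) := by
      rw [ae_iff]
      have : {z : ℝ | ¬ z ≠ 0} = {0} := by ext z; simp
      rw [this]
      exact measure_singleton 0
    -- integrability of the pieces
    have I1 : Integrable (fun z => v z * deriv (deriv φ) z) := by
      refine (hvc.mul hcφ'').integrable_of_hasCompactSupport ?_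
      exact (hφc.deriv.deriv).mul_left
    have IOnNeg : IntegrableOn (fun z => w z * deriv φ z) (Icc (-R) 0) := by
      have hcont : Continuous (fun z => ((2 - χ) * Real.exp ((2 - χ) * z)) * deriv φ z) :=
        (continuous_const.mul ((continuous_const.mul continuous_id).rexp)).mul hcφ'
      refine (hcont.integrableOn_Icc).congr ?_
      filter_upwards [ae_restrict_mem measurableSet_Icc, ae_restrict_of_ae hzero_ae]
        with z hzmem hz0
      have hzlt : z < 0 := lt_of_le_of_ne hzmem.2 hz0
      simp only [hwdef, w_neg hzlt]
    have IOnPos : IntegrableOn (fun z => w z * deriv φ z) (Icc 0 R) := by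
      have hcont : Continuous (fun z => (2 * (1 - χ) * ((1 - χ) * z + 1)) * deriv φ z) :=
        (continuous_const.mul ((continuous_const.mul continuous_id).add
          continuous_const)).mul hcφ'
      refine (hcont.integrableOn_Icc).congr_fun ?_ measurableSet_Icc
      intro z hzmem
      simp only [hwdef, w_nonneg hχ1 hzmem.1]
    have hw_supp : Function.support (fun z => w z * deriv φ z) ⊆ Icc (-R) R := by
      intro z hz
      by_contra hzn
      exact hz (by simp only [hφ'out z hzn, mul_zero])
    have I2 : Integrable (fun z => w z * deriv φ z) := by
      rw [← integrableOn_iff_integrable_of_support_subset hw_supp]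
      have hU : Icc (-R) R = Icc (-R) 0 ∪ Icc 0 R :=
        (Icc_union_Icc_eq_Icc (by linarith) hR0.le).symm
      rw [hU]
      exact IOnNeg.union IOnPos
    have IG_neg : IntegrableOn G (Icc (-R) 0) := IOnNeg.add I1.integrableOn
    have IG_pos : IntegrableOn G (Icc 0 R) := IOnPos.add I1.integrableOn
    have II_neg : IntervalIntegrable G volume (-R) 0 :=
      (intervalIntegrable_iff_integrableOn_Icc_of_le (by linarith)).2 IG_neg
    have II_pos : IntervalIntegrable G volume 0 R :=
      (intervalIntegrable_iff_integrableOn_Icc_of_le hR0.le).2 IG_pos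
    set F : ℝ → ℝ := fun z => v z * deriv φ z with hFdef
    have hFcont : Continuous F := hvc.mul hcφ'
    have hFderiv : ∀ x : ℝ, x ≠ 0 → HasDerivAt F (G x) x := by
      intro x hx
      have hd : HasDerivAt (deriv φ) (deriv (deriv φ) x) x := (hφd2 x).hasDerivAt
      rcases hx.lt_or_gt with h | h
      · exact (vinf_deriv_neg h).mul hd
      · exact (vinf_deriv_pos hχ1 h).mul hd
    have ftc1 : ∫ z in (-R)..0, G z = F 0 - F (-R) := by
      refine intervalIntegral.integral_eq_sub_of_hasDeriv_right_of_le (by linarith)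
        hFcont.continuousOn (fun x hx => ?_) II_neg
      exact (hFderiv x (ne_of_lt hx.2)).hasDerivWithinAt
    have ftc2 : ∫ z in (0:ℝ)..R, G z = F R - F 0 := by
      refine intervalIntegral.integral_eq_sub_of_hasDeriv_right_of_le hR0.le
        hFcont.continuousOn (fun x hx => ?_) II_pos
      exact (hFderiv x (ne_of_gt hx.1)).hasDerivWithinAt
    have hGout : ∀ z : ℝ, z ∉ Icc (-R) R → G z = 0 := by
      intro z hz
      simp only [hGdef]
      rw [hφ'out z hz, hφ''out z hz, mul_zero, mul_zero, add_zero]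
    have key : ∫ z, G z = (∫ z, w z * deriv φ z) + ∫ z, v z * deriv (deriv φ) z :=
      integral_add I2 I1
    have hGres : ∫ z in Icc (-R) R, G z = ∫ z, G z :=
      setIntegral_eq_integral_of_forall_compl_eq_zero hGout
    have hsplit : (∫ z in (-R)..0, G z) + (∫ z in (0:ℝ)..R, G z) = ∫ z in Icc (-R) R, G z := by
      rw [intervalIntegral.integral_add_adjacent_intervals II_neg II_pos]
      rw [integral_Icc_eq_integral_Ioc, intervalIntegral.integral_of_le (by linarith : -R ≤ R)]
    have hFR : F R = 0 := by
      simp only [hFdef]; rw [hφ'R, mul_zero]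
    have hFnegR : F (-R) = 0 := by
      simp only [hFdef]; rw [hφ'negR, mul_zero]
    have hgoal2 : (∫ z : ℝ, betaPulled χ z * v z * deriv φ z) = ∫ z, w z * deriv φ z := by
      simp only [hwdef, hvdef, wfun]
    rw [hgoal2, add_comm, ← key, ← hGres, ← hsplit, ftc1, ftc2, hFR, hFnegR]
    ring
  · -- Part 3: non-integrability
    intro h
    have h1 : IntegrableOn (vinfPulled χ) (Ioi 0) := h.integrableOn
    have h2 : IntegrableOn (fun _ : ℝ => (1:ℝ)) (Ioi 0) := by
      refine Integrable.mono h1 aestronglyMeasurable_const ?_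
      filter_upwards [ae_restrict_mem measurableSet_Ioi] with z hz
      have hz0 : (0:ℝ) < z := hz
      have hp : (1:ℝ) ≤ (1 - χ) * z + 1 := by nlinarith
      simp only [norm_one, Real.norm_eq_abs, vinfPulled, not_lt.2 hz0.le, if_false]
      rw [abs_of_nonneg (by positivity)]
      nlinarith
    rcases (integrableOn_const_iff (C := (1:ℝ))).mp h2 with h3 | h3
    · norm_num at h3
    · rw [Real.volume_Ioi] at h3
      exact (lt_irrefl _ h3).elim
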